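/- For a probability distribution on {0,1}^𝒳 and subsets S = S₁ ∪ S₂ (disjoint partition) and S' ⊆ 𝒳 disjoint from S, the influence satisfies I(S→S') ≤ I(S₁→S') + I(S₂→S'). -/

import Mathlib

open Finset

/-- Total variation distance between two p.m.f.s on a finite space. -/
noncomputable def tvFin {α : Type*} [Fintype α] (f g : α → ℝ) : ℝ :=
  (∑ y, |f y - g y|) / 2

/-- Merge two configurations: use `a` on `S` and `ω` off `S`. -/
def mergeConf {N : ℕ} (S : Finset (Fin N)) (a ω : Fin N → Bool) : Fin N → Bool :=
  fun j => if j ∈ S then a j else ω j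

/-- The conditional law of `X_{S'}` given that the configuration agrees with `c` on `T`. -/
noncomputable def condLawSet {N : ℕ} (P : (Fin N → Bool) → ℝ) (T : Finset (Fin N))
    (c : Fin N → Bool) (S' : Finset (Fin N)) (y : {i // i ∈ S'} → Bool) : ℝ :=
  (∑ σ ∈ Finset.univ.filter
      (fun σ : Fin N → Bool => (∀ j ∈ T, σ j = c j) ∧ ∀ i : {i // i ∈ S'}, σ i.val = y i), P σ) /
  (∑ σ ∈ Finset.univ.filter (fun σ : Fin N → Bool => ∀ j ∈ T, σ j = c j), P σ)

/-- The influence `I(S→S')`: the supremum, over pairs of configurations on `S` and over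
arbitrary pinnings `ω` of variables in any subset `A ⊆ 𝒳∖S∖S'`, of the total variation
distance between the two conditional laws of `X_{S'}`. -/
noncomputable def infl {N : ℕ} (P : (Fin N → Bool) → ℝ) (S S' : Finset (Fin N)) : ℝ :=
  ⨆ a : Fin N → Bool, ⨆ b : Fin N → Bool, ⨆ A : Finset (Fin N),
    ⨆ _ : A ⊆ ((Finset.univ \ S) \ S'), ⨆ ω : Fin N → Bool,
      tvFin (condLawSet P (S ∪ A) (mergeConf S a ω) S')
            (condLawSet P (S ∪ A) (mergeConf S b ω) S')

/-- Triangle inequality for `tvFin`. -/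
lemma tvFin_triangle {α : Type*} [Fintype α] (f g h : α → ℝ) :
    tvFin f g ≤ tvFin f h + tvFin h g := by
  unfold tvFin
  rw [← add_div, div_le_div_iff_of_pos_right (by norm_num : (0:ℝ) < 2),
    ← Finset.sum_add_distrib]
  exact Finset.sum_le_sum fun y _ => abs_sub_le _ _ _

private lemma bddR {ι : Sort*} [Finite ι] (f : ι → ℝ) : BddAbove (Set.range f) :=
  Set.Finite.bddAbove (Set.finite_range f)

/-- Each admissible term is at most the influence. -/
lemma le_infl {N : ℕ} (P : (Fin N → Bool) → ℝ) (S S' : Finset (Fin N))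
    (a b : Fin N → Bool) (A : Finset (Fin N))
    (hA : A ⊆ ((Finset.univ \ S) \ S')) (ω : Fin N → Bool) :
    tvFin (condLawSet P (S ∪ A) (mergeConf S a ω) S')
      (condLawSet P (S ∪ A) (mergeConf S b ω) S') ≤ infl P S S' := by
  have h1 :
      tvFin (condLawSet P (S ∪ A) (mergeConf S a ω) S')
        (condLawSet P (S ∪ A) (mergeConf S b ω) S') ≤
      ⨆ ω' : Fin N → Bool,
        tvFin (condLawSet P (S ∪ A) (mergeConf S a ω') S')
          (condLawSet P (S ∪ A) (mergeConf S b ω') S') :=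
    le_ciSup (f := fun ω' : Fin N → Bool =>
      tvFin (condLawSet P (S ∪ A) (mergeConf S a ω') S')
        (condLawSet P (S ∪ A) (mergeConf S b ω') S')) (bddR _) ω
  have h2 := le_ciSup (f := fun _ : A ⊆ ((Finset.univ \ S) \ S') =>
      ⨆ ω' : Fin N → Bool,
        tvFin (condLawSet P (S ∪ A) (mergeConf S a ω') S')
          (condLawSet P (S ∪ A) (mergeConf S b ω') S')) (bddR _) hA
  have h3 := le_ciSup (f := fun A' : Finset (Fin N) =>
      ⨆ _ : A' ⊆ ((Finset.univ \ S) \ S'), ⨆ ω' : Fin N → Bool,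
        tvFin (condLawSet P (S ∪ A') (mergeConf S a ω') S')
          (condLawSet P (S ∪ A') (mergeConf S b ω') S')) (bddR _) A
  have h4 := le_ciSup (f := fun b' : Fin N → Bool =>
      ⨆ A' : Finset (Fin N), ⨆ _ : A' ⊆ ((Finset.univ \ S) \ S'), ⨆ ω' : Fin N → Bool,
        tvFin (condLawSet P (S ∪ A') (mergeConf S a ω') S')
          (condLawSet P (S ∪ A') (mergeConf S b' ω') S')) (bddR _) b
  have h5 := le_ciSup (f := fun a' : Fin N → Bool =>
      ⨆ b' : Fin N → Bool, ⨆ A' : Finset (Fin N),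
        ⨆ _ : A' ⊆ ((Finset.univ \ S) \ S'), ⨆ ω' : Fin N → Bool,
        tvFin (condLawSet P (S ∪ A') (mergeConf S a' ω') S')
          (condLawSet P (S ∪ A') (mergeConf S b' ω') S')) (bddR _) a
  exact le_trans h1 (le_trans h2 (le_trans h3 (le_trans h4 h5)))

lemma infl_nonneg {N : ℕ} (P : (Fin N → Bool) → ℝ) (S S' : Finset (Fin N)) :
    0 ≤ infl P S S' := by
  have h := le_infl P S S' (fun _ => false) (fun _ => false) ∅
    (Finset.empty_subset _) (fun _ => false)
  have h0 : tvFin (condLawSet P (S ∪ ∅) (mergeConf S (fun _ => false) (fun _ => false)) S')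
      (condLawSet P (S ∪ ∅) (mergeConf S (fun _ => false) (fun _ => false)) S') = 0 := by
    simp [tvFin]
  linarith

/-- Subadditivity of influence in the source set: `I(S₁∪S₂ → S') ≤ I(S₁→S') + I(S₂→S')`. -/
theorem stmt7 {N : ℕ} (P : (Fin N → Bool) → ℝ)
    (hP0 : ∀ σ, 0 ≤ P σ) (hP1 : ∑ σ, P σ = 1)
    (S₁ S₂ S' : Finset (Fin N))
    (h12 : Disjoint S₁ S₂) (hS' : Disjoint (S₁ ∪ S₂) S') :
    infl P (S₁ ∪ S₂) S' ≤ infl P S₁ S' + infl P S₂ S' := by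
  have hnn : (0:ℝ) ≤ infl P S₁ S' + infl P S₂ S' :=
    add_nonneg (infl_nonneg P S₁ S') (infl_nonneg P S₂ S')
  refine Real.iSup_le (fun a => ?_) hnn
  refine Real.iSup_le (fun b => ?_) hnn
  refine Real.iSup_le (fun A => ?_) hnn
  refine Real.iSup_le (fun hA => ?_) hnn
  refine Real.iSup_le (fun ω => ?_) hnn
  set m : Fin N → Bool := fun j => if j ∈ S₁ then b j else a j with hm
  -- rewriting equalities
  have e1 : S₁ ∪ (A ∪ S₂) = (S₁ ∪ S₂) ∪ A := by
    ext i; simp only [Finset.mem_union]; tauto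
  have e6 : S₂ ∪ (A ∪ S₁) = (S₁ ∪ S₂) ∪ A := by
    ext i; simp only [Finset.mem_union]; tauto
  have e2 : mergeConf S₁ a (mergeConf S₂ a ω) = mergeConf (S₁ ∪ S₂) a ω := by
    funext j
    simp only [mergeConf, Finset.mem_union]
    by_cases h1 : j ∈ S₁ <;> by_cases h2 : j ∈ S₂ <;> simp [h1, h2]
  have e3 : mergeConf S₁ b (mergeConf S₂ a ω) = mergeConf (S₁ ∪ S₂) m ω := by
    funext j
    simp only [mergeConf, Finset.mem_union, hm]
    by_cases h1 : j ∈ S₁ <;> by_cases h2 : j ∈ S₂ <;> simp [h1, h2]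
  have e4 : mergeConf S₂ a (mergeConf S₁ b ω) = mergeConf (S₁ ∪ S₂) m ω := by
    funext j
    simp only [mergeConf, Finset.mem_union, hm]
    by_cases h1 : j ∈ S₁ <;> by_cases h2 : j ∈ S₂ <;> simp [h1, h2]
    exact absurd h2 (Finset.disjoint_left.mp h12 h1)
  have e5 : mergeConf S₂ b (mergeConf S₁ b ω) = mergeConf (S₁ ∪ S₂) b ω := by
    funext j
    simp only [mergeConf, Finset.mem_union]
    by_cases h1 : j ∈ S₁ <;> by_cases h2 : j ∈ S₂ <;> simp [h1, h2]
  -- subset facts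
  have hA' : ∀ i ∈ A, i ∉ S₁ ∧ i ∉ S₂ ∧ i ∉ S' := by
    intro i hi
    have := hA hi
    simp only [Finset.mem_sdiff, Finset.mem_univ, true_and, Finset.mem_union] at this
    tauto
  have hA1 : A ∪ S₂ ⊆ ((Finset.univ \ S₁) \ S') := by
    intro i hi
    simp only [Finset.mem_union] at hi
    simp only [Finset.mem_sdiff, Finset.mem_univ, true_and]
    rcases hi with h | h
    · exact ⟨(hA' i h).1, (hA' i h).2.2⟩
    · exact ⟨fun h1 => Finset.disjoint_left.mp h12 h1 h,
        Finset.disjoint_left.mp hS' (Finset.mem_union_right _ h)⟩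
  have hA2 : A ∪ S₁ ⊆ ((Finset.univ \ S₂) \ S') := by
    intro i hi
    simp only [Finset.mem_union] at hi
    simp only [Finset.mem_sdiff, Finset.mem_univ, true_and]
    rcases hi with h | h
    · exact ⟨(hA' i h).2.1, (hA' i h).2.2⟩
    · exact ⟨fun h2 => Finset.disjoint_left.mp h12 h h2,
        Finset.disjoint_left.mp hS' (Finset.mem_union_left _ h)⟩
  -- term 1
  have t1 := le_infl P S₁ S' a b (A ∪ S₂) hA1 (mergeConf S₂ a ω)
  rw [e1, e2, e3] at t1
  -- term 2
  have t2 := le_infl P S₂ S' a b (A ∪ S₁) hA2 (mergeConf S₁ b ω)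
  rw [e6, e4, e5] at t2
  calc tvFin (condLawSet P ((S₁ ∪ S₂) ∪ A) (mergeConf (S₁ ∪ S₂) a ω) S')
        (condLawSet P ((S₁ ∪ S₂) ∪ A) (mergeConf (S₁ ∪ S₂) b ω) S')
      ≤ tvFin (condLawSet P ((S₁ ∪ S₂) ∪ A) (mergeConf (S₁ ∪ S₂) a ω) S')
          (condLawSet P ((S₁ ∪ S₂) ∪ A) (mergeConf (S₁ ∪ S₂) m ω) S') +
        tvFin (condLawSet P ((S₁ ∪ S₂) ∪ A) (mergeConf (S₁ ∪ S₂) m ω) S')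
          (condLawSet P ((S₁ ∪ S₂) ∪ A) (mergeConf (S₁ ∪ S₂) b ω) S') :=
      tvFin_triangle _ _ _
    _ ≤ infl P S₁ S' + infl P S₂ S' := add_le_add t1 t2
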